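/- Let B = {B_j}_{j=1}^s be a partition of H, C = {C_k}_{k=1}^t a partition of N, c* = max_k |C_k|. Then V(B) × W(C) × Ω is regular if and only if gcd( gcd(|B_1|,...,|B_s|), lcm(2, c*!) ) = 1. -/

import Mathlib

/-- A preference profile: each individual `i : Fin h` has a linear order on the `n`
alternatives, identified with the permutation of `Fin n` mapping ranks to alternatives. -/
abbrev Profile (h n : Nat) := Fin h → Equiv.Perm (Fin n)

/-- The order-reversing permutation `ρ₀`. -/
def rho0 (n : Nat) : Equiv.Perm (Fin n) := Fin.revPerm

/-- The subgroup `Ω = {id, ρ₀}` of `S_n` (generated by `ρ₀`, which has order 2). -/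
def Omega (n : Nat) : Subgroup (Equiv.Perm (Fin n)) := Subgroup.zpowers (rho0 n)

/-- `ρ₀` as an element of `Ω`. -/
def omegaRho0 (n : Nat) : Omega n := ⟨rho0 n, Subgroup.mem_zpowers _⟩

/-- The group `G = S_h × S_n × Ω`. -/
abbrev GG (h n : Nat) := Equiv.Perm (Fin h) × Equiv.Perm (Fin n) × (Omega n)

/-- The action of `(φ, ψ, ρ) ∈ G` on a profile: `(p^{(φ,ψ,ρ)})_i = ψ p_{φ⁻¹(i)} ρ`. -/
def act {h n : Nat} (g : GG h n) (p : Profile h n) : Profile h n :=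
  fun i => g.2.1 * p (g.1⁻¹ i) * (g.2.2 : Equiv.Perm (Fin n))

/-- A rule `F` is `U`-symmetric if `F(p^{(φ,ψ,ρ)}) = ψ F(p) ρ` for all `p` and `(φ,ψ,ρ) ∈ U`. -/
def USymm {h n : Nat} (U : Set (GG h n)) (F : Profile h n → Equiv.Perm (Fin n)) : Prop :=
  ∀ p : Profile h n, ∀ g ∈ U, F (act g p) = g.2.1 * F p * (g.2.2 : Equiv.Perm (Fin n))

/-- `S₁^U(p) = { q : ψ q ρ = q for all (φ,ψ,ρ) in the stabilizer of p in U }`. -/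
def S1set {h n : Nat} (U : Set (GG h n)) (p : Profile h n) : Set (Equiv.Perm (Fin n)) :=
  {q | ∀ g ∈ U, act g p = p → g.2.1 * q * (g.2.2 : Equiv.Perm (Fin n)) = q}

/-- Regularity of `U`: for every profile `p` there is `ψ*` conjugate to `ρ₀` with
`Stab_U(p) ⊆ (S_h × {id} × {id}) ∪ (S_h × {ψ*} × {ρ₀})`. -/
def Regular {h n : Nat} (U : Set (GG h n)) : Prop :=
  ∀ p : Profile h n, ∃ ψs : Equiv.Perm (Fin n), IsConj (rho0 n) ψs ∧
    ∀ g ∈ U, act g p = p →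
      (g.2.1 = 1 ∧ (g.2.2 : Equiv.Perm (Fin n)) = 1) ∨
      (g.2.1 = ψs ∧ (g.2.2 : Equiv.Perm (Fin n)) = rho0 n)

/-- Number of individuals strictly preferring `x` to `y` in profile `p`
(smaller rank = better, since permutations send ranks to alternatives). -/
def prefCount {h n : Nat} (p : Profile h n) (x y : Fin n) : Nat :=
  (Finset.univ.filter fun i => (p i)⁻¹ x < (p i)⁻¹ y).card

/-- `C_ν(p)`: linear orders consistent with the `ν`-majority principle applied to `p`. -/
def Cset {h n : Nat} (p : Profile h n) (ν : Nat) : Set (Equiv.Perm (Fin n)) :=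
  {q | ∀ x y : Fin n, ν ≤ prefCount p x y → q⁻¹ x < q⁻¹ y}

/-- `ν(p)`: the minimal majority threshold `ν ∈ ℕ ∩ (h/2, h]` with `C_ν(p) ≠ ∅`. -/
noncomputable def nuMin {h n : Nat} (p : Profile h n) : Nat :=
  sInf {ν : Nat | h < 2 * ν ∧ ν ≤ h ∧ (Cset p ν).Nonempty}

/-- minimal majority rule. -/
def MinMaj {h n : Nat} (F : Profile h n → Equiv.Perm (Fin n)) : Prop :=
  ∀ p : Profile h n, F p ∈ Cset p (nuMin p)

/-- `gcd(T(φ))`: the gcd of the lengths of the orbits (cycles) of `φ`. -/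
noncomputable def gcdOrbits {h : Nat} (phi : Equiv.Perm (Fin h)) : Nat :=
  Finset.univ.gcd fun i => Function.minimalPeriod (⇑phi) i


section AuxStmt14

open Finset Function

section AuxGen
variable {α : Type*} [Fintype α] [DecidableEq α]

lemma perm_minPeriod_pos (σ : Equiv.Perm α) (x : α) : 0 < Function.minimalPeriod ⇑σ x := by
  apply Function.IsPeriodicPt.minimalPeriod_pos (orderOf_pos σ)
  show (⇑σ)^[orderOf σ] x = x
  rw [Equiv.Perm.iterate_eq_pow, pow_orderOf_eq_one]
  rfl

lemma orbit_subset (σ : Equiv.Perm α) {S : Finset α} (hS : ∀ x ∈ S, σ x ∈ S) {x : α}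
    (hx : x ∈ S) (a : ℕ) : (⇑σ)^[a] x ∈ S := by
  induction a with
  | zero => exact hx
  | succ a ih => rw [Function.iterate_succ_apply']; exact hS _ ih

lemma orbit_card (σ : Equiv.Perm α) (x : α) :
    ((Finset.range (Function.minimalPeriod ⇑σ x)).image (fun a => (⇑σ)^[a] x)).card
      = Function.minimalPeriod ⇑σ x := by
  rw [Finset.card_image_of_injOn, Finset.card_range]
  intro a ha b hb hab
  exact Function.iterate_injOn_Iio_minimalPeriod (by simpa using ha) (by simpa using hb) hab

lemma minPeriod_le_card (σ : Equiv.Perm α) {S : Finset α} (hS : ∀ x ∈ S, σ x ∈ S) {x : α}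
    (hx : x ∈ S) : Function.minimalPeriod ⇑σ x ≤ S.card := by
  rw [← orbit_card σ x]
  apply Finset.card_le_card
  intro y hy
  simp only [Finset.mem_image, Finset.mem_range] at hy
  obtain ⟨a, -, rfl⟩ := hy
  exact orbit_subset σ hS hx a

lemma dvd_card_of_invariant (σ : Equiv.Perm α) (m : ℕ) :
    ∀ S : Finset α, (∀ x ∈ S, σ x ∈ S) →
      (∀ x ∈ S, m ∣ Function.minimalPeriod ⇑σ x) → m ∣ S.card := by
  intro S
  induction S using Finset.strongInduction with
  | _ S ih =>
    rcases S.eq_empty_or_nonempty with rfl | ⟨x, hx⟩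
    · simp
    intro hS hm
    set ℓ := Function.minimalPeriod ⇑σ x with hℓ
    set O : Finset α := (Finset.range ℓ).image (fun a => (⇑σ)^[a] x) with hO
    have hOS : O ⊆ S := by
      intro y hy
      simp only [hO, Finset.mem_image, Finset.mem_range] at hy
      obtain ⟨a, -, rfl⟩ := hy
      exact orbit_subset σ hS hx a
    have hxO : x ∈ O := by
      simp only [hO, Finset.mem_image, Finset.mem_range]
      exact ⟨0, perm_minPeriod_pos σ x, rfl⟩
    have hcardO : O.card = ℓ := orbit_card σ x
    -- O is invariant under σ
    have hOinv : ∀ y ∈ O, σ y ∈ O := by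
      intro y hy
      simp only [hO, Finset.mem_image, Finset.mem_range] at hy ⊢
      obtain ⟨a, ha, rfl⟩ := hy
      rcases Nat.lt_or_ge (a+1) ℓ with h1 | h1
      · exact ⟨a+1, h1, Function.iterate_succ_apply' (⇑σ) a x⟩
      · have haℓ : a + 1 = ℓ := by omega
        refine ⟨0, perm_minPeriod_pos σ x, ?_⟩
        have h2 : (⇑σ)^[a+1] x = x := by
          rw [haℓ]; exact Function.isPeriodicPt_minimalPeriod ⇑σ x
        rw [Function.iterate_succ_apply'] at h2
        simp only [Function.iterate_zero_apply]
        exact h2.symm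
    have hsub : S \ O ⊂ S := by
      apply Finset.sdiff_ssubset (by intro y hy; exact hOS hy) ⟨x, hxO⟩
    have hinv' : ∀ y ∈ S \ O, σ y ∈ S \ O := by
      intro y hy
      rw [Finset.mem_sdiff] at hy ⊢
      refine ⟨hS _ hy.1, fun hcon => hy.2 ?_⟩
      -- σ y ∈ O with O invariant and card argument: O = image σ O
      have himg : Finset.image ⇑σ O = O := by
        apply Finset.eq_of_subset_of_card_le
        · intro z hz
          simp only [Finset.mem_image] at hz
          obtain ⟨w, hw, rfl⟩ := hz
          exact hOinv _ hw
        · rw [Finset.card_image_of_injective _ σ.injective]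
      rw [← himg] at hcon
      simp only [Finset.mem_image] at hcon
      obtain ⟨w, hw, hwy⟩ := hcon
      rwa [← σ.injective hwy]
    have hdvd2 := ih _ hsub hinv' (fun y hy => hm y (Finset.mem_sdiff.mp hy).1)
    have hsum := Finset.card_sdiff_add_card_eq_card hOS
    have hdvd1 : m ∣ O.card := hcardO ▸ hm x hx
    rw [← hsum]
    exact Nat.dvd_add hdvd2 hdvd1
end AuxGen

lemma gadget {h s : ℕ} (B : Fin s → Finset (Fin h))
    (hBdisj : ∀ j j', j ≠ j' → Disjoint (B j) (B j'))
    (hBcov : ∀ i, ∃ j, i ∈ B j)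
    (q : ℕ) [NeZero q] (hq : 0 < q) (hdvd : ∀ j, q ∣ (B j).card) :
    ∃ (φ : Equiv.Perm (Fin h)) (c : Fin h → Fin q),
      (∀ j, (B j).image ⇑φ = B j) ∧ ∀ i, c (φ i) = c i + 1 := by
  classical
  set classify : Fin h → Fin s := fun i => (hBcov i).choose with hcl
  have hclmem : ∀ i, i ∈ B (classify i) := fun i => (hBcov i).choose_spec
  have mem_iff : ∀ i j, i ∈ B j ↔ classify i = j := by
    intro i j
    constructor
    · intro hij
      by_contra hne
      have := (hBdisj _ _ (fun e => hne e)).le_bot (Finset.mem_inter.mpr ⟨hclmem i, hij⟩)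
      simpa using this
    · rintro rfl; exact hclmem i
  set m : Fin s → ℕ := fun j => (B j).card / q with hm
  have hcard : ∀ j, Fintype.card {i // classify i = j} = Fintype.card (Fin (m j) × Fin q) := by
    intro j
    rw [Fintype.card_subtype]
    have : Finset.univ.filter (fun i => classify i = j) = B j := by
      ext i; simp [mem_iff]
    rw [this]
    simp [hm, Nat.div_mul_cancel (hdvd j)]
  set e : ∀ j, {i // classify i = j} ≃ (Fin (m j) × Fin q) :=
    fun j => Fintype.equivOfCardEq (hcard j) with he
  set E : Fin h ≃ Σ j, Fin (m j) × Fin q :=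
    (Equiv.sigmaFiberEquiv classify).symm.trans (Equiv.sigmaCongrRight e) with hE
  set shift : Equiv.Perm (Σ j, Fin (m j) × Fin q) :=
    Equiv.sigmaCongrRight (fun _ => Equiv.prodCongr (Equiv.refl _) (Equiv.addRight 1)) with hsh
  have hshift1 : ∀ x, (shift x).1 = x.1 := fun x => rfl
  have hshift2 : ∀ x : (Σ j, Fin (m j) × Fin q), (shift x).2.2 = x.2.2 + 1 := fun x => rfl
  have hE1 : ∀ i, (E i).1 = classify i := fun i => rfl
  have hEs : ∀ x, classify (E.symm x) = x.1 := by
    intro x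
    have : E (E.symm x) = x := E.apply_symm_apply x
    rw [← hE1 (E.symm x), this]
  refine ⟨(E.trans shift).trans E.symm, fun i => (E i).2.2, ?_, ?_⟩
  · intro j
    have hsub : ∀ i ∈ B j, E.symm (shift (E i)) ∈ B j := by
      intro i hij
      rw [mem_iff] at hij ⊢
      rw [hEs, hshift1, hE1, hij]
    apply Finset.eq_of_subset_of_card_le
    · intro y hy
      simp only [Finset.mem_image] at hy
      obtain ⟨i, hi, rfl⟩ := hy
      exact hsub i hi
    · rw [Finset.card_image_of_injective _ (((E.trans shift).trans E.symm).injective)]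
  · intro i
    show (E (E.symm (shift (E i)))).2.2 = (E i).2.2 + 1
    rw [E.apply_symm_apply, hshift2]

lemma pow_mod_helper {G : Type*} [Group G] {u : G} {q : ℕ} (hu : u ^ q = 1) (a : ℕ) :
    u ^ (a % q) = u ^ a := by
  conv_rhs => rw [← Nat.div_add_mod a q]
  rw [pow_add, pow_mul, hu, one_pow, one_mul]

lemma stab_iter {h n : ℕ} {p : (Fin h → Equiv.Perm (Fin n))} {φ : Equiv.Perm (Fin h)}
    {ψ r : Equiv.Perm (Fin n)}
    (hs : ∀ i, ψ * p (φ⁻¹ i) * r = p i) :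
    ∀ (k : ℕ) (i), ψ ^ k * p ((⇑φ⁻¹)^[k] i) * r ^ k = p i := by
  intro k
  induction k with
  | zero => simp
  | succ k ih =>
    intro i
    have h1 := ih (φ⁻¹ i)
    rw [← Function.iterate_succ_apply] at h1
    calc ψ ^ (k+1) * p ((⇑φ⁻¹)^[k+1] i) * r ^ (k+1)
        = ψ * (ψ ^ k * p ((⇑φ⁻¹)^[k+1] i) * r ^ k) * r := by
          rw [pow_succ' ψ, pow_succ r]; group
      _ = ψ * p (φ⁻¹ i) * r := by rw [h1]
      _ = p i := hs i

lemma image_mem_perm {β : Type*} [DecidableEq β] {g : Equiv.Perm β} {S : Finset β}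
    (hg : S.image ⇑g = S) {x : β} (hx : x ∈ S) : g x ∈ S := by
  have := Finset.mem_image_of_mem (⇑g) hx
  rwa [hg] at this

lemma image_inv_mem {β : Type*} [DecidableEq β] {g : Equiv.Perm β} {S : Finset β}
    (hg : S.image ⇑g = S) {x : β} (hx : x ∈ S) : g⁻¹ x ∈ S := by
  rw [← hg] at hx
  obtain ⟨y, hy, rfl⟩ := Finset.mem_image.mp hx
  simpa using hy

lemma image_inv_eq {β : Type*} [DecidableEq β] {g : Equiv.Perm β} {S : Finset β}
    (hg : S.image ⇑g = S) : S.image ⇑g⁻¹ = S := by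
  conv_lhs => rw [← hg]
  rw [Finset.image_image]
  have : (⇑g⁻¹ ∘ ⇑g) = id := by funext x; simp
  rw [this, Finset.image_id]

lemma rho0_sq (n : ℕ) : rho0 n * rho0 n = 1 := by
  ext x
  simp [rho0]

lemma rho0_ne_one {n : ℕ} (hn : 2 ≤ n) : rho0 n ≠ 1 := by
  intro heq
  have h0 := Equiv.ext_iff.mp heq ⟨0, by omega⟩
  have : (rho0 n ⟨0, by omega⟩).val = n - 1 := by
    simp [rho0, Fin.rev]
  rw [h0] at this
  simp at this
  omega

lemma omega_cases {n : ℕ} (u : Omega n) :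
    (u : Equiv.Perm (Fin n)) = 1 ∨ (u : Equiv.Perm (Fin n)) = rho0 n := by
  obtain ⟨z, hz⟩ := Subgroup.mem_zpowers_iff.mp u.2
  rcases Int.even_or_odd z with ⟨c, rfl⟩ | ⟨c, rfl⟩
  · left
    rw [← hz]
    have : (rho0 n) ^ (c + c) = ((rho0 n) ^ (2 : ℤ)) ^ c := by
      rw [← zpow_mul]; ring_nf
    rw [this]
    have h2 : (rho0 n) ^ (2 : ℤ) = 1 := by
      rw [show (2:ℤ) = ((2:ℕ):ℤ) by norm_num, zpow_natCast, pow_two, rho0_sq]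
    rw [h2, one_zpow]
  · right
    rw [← hz]
    have : (rho0 n) ^ (2*c + 1) = ((rho0 n) ^ (2 : ℤ)) ^ c * rho0 n := by
      rw [zpow_add, ← zpow_mul, zpow_one]
    rw [this]
    have h2 : (rho0 n) ^ (2 : ℤ) = 1 := by
      rw [show (2:ℤ) = ((2:ℕ):ℤ) by norm_num, zpow_natCast, pow_two, rho0_sq]
    rw [h2, one_zpow, one_mul]

lemma fin_pow_succ {G : Type*} [Group G] {q : ℕ} [NeZero q] {u : G} (hu : u ^ q = 1)
    (b : Fin q) : u ^ ((b + 1 : Fin q) : ℕ) = u ^ (b : ℕ) * u := by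
  have h1 : ((b + 1 : Fin q) : ℕ) = ((b : ℕ) + ((1 : Fin q) : ℕ)) % q := Fin.val_add b 1
  rw [h1, pow_mod_helper hu, pow_add, Fin.val_one', pow_mod_helper hu, pow_one]

open Fin.NatCast in
lemma finRotate_pow_self (m : ℕ) : (finRotate (m+1)) ^ (m+1) = 1 := by
  have key : ∀ (k : ℕ) (x : Fin (m+1)), ((finRotate (m+1)) ^ k) x = x + (k : Fin (m+1)) := by
    intro k
    induction k with
    | zero => intro x; simp
    | succ k ih =>
      intro x
      rw [pow_succ', Equiv.Perm.mul_apply, finRotate_succ_apply, ih]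
      push_cast
      rw [add_assoc]
  ext x
  rw [key (m+1) x]
  simp

lemma fin_one_ne_zero' {q : ℕ} [NeZero q] (hq : 2 ≤ q) : (1 : Fin q) ≠ 0 := by
  intro he
  have h1 : ((1 : Fin q) : ℕ) = 1 := by rw [Fin.val_one']; exact Nat.mod_eq_of_lt (by omega)
  rw [he] at h1
  simp at h1

lemma finRotate_pow_eq_one {q : ℕ} (hq : 1 ≤ q) : (finRotate q) ^ q = 1 := by
  obtain ⟨m, rfl⟩ : ∃ m, q = m + 1 := ⟨q - 1, by omega⟩
  exact finRotate_pow_self m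

lemma finRotate_apply_zero' {q : ℕ} (hq : 2 ≤ q) [NeZero q] :
    finRotate q 0 = 1 := by
  obtain ⟨m, rfl⟩ : ∃ m, q = m + 1 := ⟨q - 1, by omega⟩
  rw [finRotate_succ_apply, zero_add]

lemma not_regular₁ {h n : ℕ} (hn : 2 ≤ n) {U : Set (GG h n)} {g : GG h n} {p : Profile h n}
    (hg : g ∈ U) (hstab : act g p = p) (h1 : g.2.1 = 1)
    (h2 : (g.2.2 : Equiv.Perm (Fin n)) = rho0 n) : ¬ Regular U := by
  intro hreg
  obtain ⟨ψs, hcj, hbr⟩ := hreg p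
  rcases hbr g hg hstab with ⟨-, h4⟩ | ⟨h3, -⟩
  · rw [h2] at h4; exact rho0_ne_one hn h4
  · rw [h1] at h3
    rw [← h3] at hcj
    exact rho0_ne_one hn (isConj_one_left.mp hcj)

lemma not_regular₂ {h n : ℕ} (hn : 2 ≤ n) {U : Set (GG h n)} {g : GG h n} {p : Profile h n}
    (hg : g ∈ U) (hstab : act g p = p) (h1 : g.2.1 ≠ 1)
    (h2 : (g.2.2 : Equiv.Perm (Fin n)) = 1) : ¬ Regular U := by
  intro hreg
  obtain ⟨ψs, hcj, hbr⟩ := hreg p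
  rcases hbr g hg hstab with ⟨h3, -⟩ | ⟨-, h4⟩
  · exact h1 h3
  · rw [h2] at h4; exact rho0_ne_one hn h4.symm

end AuxStmt14

theorem stmt14 {h n : Nat} (hh : 2 ≤ h) (hn : 2 ≤ n)
    (s t : Nat) (B : Fin s → Finset (Fin h)) (C : Fin t → Finset (Fin n))
    (hBne : ∀ j, (B j).Nonempty)
    (hBdisj : ∀ j j', j ≠ j' → Disjoint (B j) (B j'))
    (hBcov : ∀ i : Fin h, ∃ j, i ∈ B j)
    (hCne : ∀ k, (C k).Nonempty)
    (hCdisj : ∀ k k', k ≠ k' → Disjoint (C k) (C k'))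
    (hCcov : ∀ x : Fin n, ∃ k, x ∈ C k) :
    Regular {g : GG h n | (∀ j, (B j).image ⇑g.1 = B j) ∧
        (∀ k, (C k).image ⇑g.2.1 = C k)} ↔
      Nat.gcd (Finset.univ.gcd fun j => (B j).card)
        (Nat.lcm 2 (Finset.univ.sup fun k => (C k).card).factorial) = 1 := by
  classical
  set d := (Finset.univ.gcd fun j => (B j).card) with hd
  set cstar := (Finset.univ.sup fun k => (C k).card) with hcstar
  set Fct := cstar.factorial with hFct
  set L := Nat.lcm 2 Fct with hL
  constructor
  · -- Regular → coprime
    intro hreg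
    by_contra hne
    have hqp : (Nat.gcd d L).minFac.Prime := Nat.minFac_prime hne
    set q := (Nat.gcd d L).minFac with hqdef
    haveI : NeZero q := ⟨hqp.pos.ne'⟩
    have hqd : q ∣ d := (Nat.minFac_dvd _).trans (Nat.gcd_dvd_left d L)
    have hqL : q ∣ L := (Nat.minFac_dvd _).trans (Nat.gcd_dvd_right d L)
    have hqB : ∀ j, q ∣ (B j).card := fun j => hqd.trans (Finset.gcd_dvd (Finset.mem_univ j))
    obtain ⟨φ, c, hφB, hc⟩ := gadget B hBdisj hBcov q hqp.pos hqB
    have hci : ∀ i, c i = c (φ⁻¹ i) + 1 := by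
      intro i
      conv_lhs => rw [← show φ (φ⁻¹ i) = i from φ.apply_symm_apply i]
      exact hc (φ⁻¹ i)
    have hq2F : q ∣ 2 ∨ q ∣ Fct := by
      apply (Nat.Prime.dvd_mul hqp).mp
      exact hqL.trans (Nat.lcm_dvd (dvd_mul_right 2 Fct) (dvd_mul_left Fct 2))
    rcases hq2F with hq2 | hqF
    · -- q = 2 : use (φ, 1, ρ₀)
      have hq2' : q = 2 := (Nat.prime_dvd_prime_iff_eq hqp Nat.prime_two).mp hq2
      have hrq : (rho0 n) ^ q = 1 := by rw [hq2', pow_two, rho0_sq]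
      set p : Profile h n := fun i => (rho0 n) ^ ((c i : ℕ)) with hp
      set g : GG h n := (φ, 1, omegaRho0 n) with hg
      have hgU : g ∈ {g : GG h n | (∀ j, (B j).image ⇑g.1 = B j) ∧
          (∀ k, (C k).image ⇑g.2.1 = C k)} := by
        refine ⟨hφB, fun k => ?_⟩
        show (C k).image ⇑(1 : Equiv.Perm (Fin n)) = C k
        simp
      have hstab : act g p = p := by
        funext i
        show (1 : Equiv.Perm (Fin n)) * p (φ⁻¹ i) * (rho0 n) = p i
        rw [one_mul]
        show (rho0 n) ^ ((c (φ⁻¹ i) : ℕ)) * rho0 n = (rho0 n) ^ ((c i : ℕ))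
        rw [hci i, fin_pow_succ hrq]
      exact not_regular₁ hn hgU hstab rfl rfl hreg
    · -- q ≤ cstar : use (φ, ψ, 1) with ψ a q-cycle inside C kstar
      have hqc : q ≤ cstar := (Nat.Prime.dvd_factorial hqp).mp hqF
      haveI ht1 : Nonempty (Fin t) := ⟨(hCcov ⟨0, by omega⟩).choose⟩
      obtain ⟨kstar, -, hkstar⟩ :=
        Finset.exists_mem_eq_sup Finset.univ Finset.univ_nonempty (fun k => (C k).card)
      have hqCk : q ≤ (C kstar).card := by rw [hcstar] at hqc; rw [← hkstar]; exact hqc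
      set f : Fin q ↪ Fin n := (Fin.castLEEmb hqCk).trans
        ((C kstar).equivFin.symm.toEmbedding.trans (Function.Embedding.subtype _)) with hf
      have hfC : ∀ a, f a ∈ C kstar := by
        intro a
        show ((C kstar).equivFin.symm (Fin.castLE hqCk a) : Fin n) ∈ C kstar
        exact Finset.coe_mem _
      haveI : DecidablePred (· ∈ Set.range ⇑f) := Classical.decPred _
      set eqv : Fin q ≃ {x : Fin n // x ∈ Set.range ⇑f} :=
        { toFun := fun a => ⟨f a, a, rfl⟩
          invFun := fun x => x.2.choose
          left_inv := by
            intro a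
            apply f.injective
            exact (Exists.choose_spec (⟨a, rfl⟩ : ∃ y, f y = f a))
          right_inv := by
            intro x
            apply Subtype.ext
            exact x.2.choose_spec } with heqv
      set ψ : Equiv.Perm (Fin n) := Equiv.Perm.extendDomain (finRotate q) eqv with hψdef
      have hcoe : ∀ a, ((eqv a : {x : Fin n // x ∈ Set.range ⇑f}) : Fin n) = f a := fun a => rfl
      have happ : ∀ a, ψ (f a) = f (finRotate q a) := by
        intro a
        have h1 := Equiv.Perm.extendDomain_apply_image (finRotate q) eqv a
        rwa [hcoe, hcoe] at h1
      have hψq : ψ ^ q = 1 := by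
        rw [hψdef, ← Equiv.Perm.extendDomain_pow, finRotate_pow_eq_one hqp.pos,
          Equiv.Perm.extendDomain_one]
      have hψne : ψ ≠ 1 := by
        intro he
        have h1 := happ 0
        rw [he, finRotate_apply_zero' hqp.two_le] at h1
        have h2 : f 1 = f 0 := by simpa using h1.symm
        exact fin_one_ne_zero' hqp.two_le (f.injective h2)
      have hrange : ∀ x : Fin n, x ∈ Set.range ⇑f → x ∈ C kstar := by
        rintro x ⟨a, rfl⟩; exact hfC a
      have hψC : ∀ k, (C k).image ⇑ψ = C k := by
        intro k
        apply Finset.eq_of_subset_of_card_le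
        · intro y hy
          obtain ⟨x, hx, rfl⟩ := Finset.mem_image.mp hy
          by_cases hxr : x ∈ Set.range ⇑f
          · obtain ⟨a, rfl⟩ := hxr
            have hkk : k = kstar := by
              by_contra hkk
              have := (hCdisj k kstar hkk).le_bot (Finset.mem_inter.mpr ⟨hx, hfC a⟩)
              simpa using this
            rw [happ a, hkk]
            exact hfC _
          · rw [Equiv.Perm.extendDomain_apply_not_subtype (finRotate q) eqv hxr]
            exact hx
        · rw [Finset.card_image_of_injective _ ψ.injective]
      set p : Profile h n := fun i => ψ ^ ((c i : ℕ)) with hp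
      set g : GG h n := (φ, ψ, 1) with hg
      have hgU : g ∈ {g : GG h n | (∀ j, (B j).image ⇑g.1 = B j) ∧
          (∀ k, (C k).image ⇑g.2.1 = C k)} := ⟨hφB, hψC⟩
      have hstab : act g p = p := by
        funext i
        show ψ * p (φ⁻¹ i) * ((1 : Omega n) : Equiv.Perm (Fin n)) = p i
        rw [OneMemClass.coe_one, mul_one]
        show ψ * ψ ^ ((c (φ⁻¹ i) : ℕ)) = ψ ^ ((c i : ℕ))
        rw [hci i, fin_pow_succ hψq, ← pow_succ, ← pow_succ']
      exact not_regular₂ hn hgU hstab hψne rfl hreg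
  · -- coprime → Regular
    intro hcop p
    have keyB : ∀ (φ : Equiv.Perm (Fin h)) (ψ : Equiv.Perm (Fin n)),
        (∀ j, (B j).image ⇑φ = B j) → (∀ k, (C k).image ⇑ψ = C k) →
        (∀ i, ψ * p (φ⁻¹ i) = p i) → ψ = 1 := by
      intro φ ψ hφ hψ hst
      have hiter := stab_iter (p := p) (φ := φ) (ψ := ψ) (r := 1)
        (by intro i; rw [mul_one]; exact hst i)
      have hdvdper : ∀ i, orderOf ψ ∣ Function.minimalPeriod (⇑φ⁻¹) i := by
        intro i
        apply orderOf_dvd_of_pow_eq_one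
        have h1 := hiter (Function.minimalPeriod (⇑φ⁻¹) i) i
        rw [Function.iterate_minimalPeriod, one_pow, mul_one] at h1
        have h2 : ψ ^ (Function.minimalPeriod (⇑φ⁻¹) i) * p i = 1 * p i := by
          rw [h1, one_mul]
        exact mul_right_cancel h2
      have hdvdB : orderOf ψ ∣ d := by
        apply Finset.dvd_gcd
        intro j _
        exact dvd_card_of_invariant φ⁻¹ _ (B j)
          (fun x hx => image_inv_mem (hφ j) hx) (fun x _ => hdvdper x)
      have hdvdL : orderOf ψ ∣ L := by
        apply Nat.dvd_trans _ (Nat.dvd_lcm_right 2 Fct)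
        apply orderOf_dvd_of_pow_eq_one
        refine Equiv.ext fun x => ?_
        obtain ⟨k, hk⟩ := hCcov x
        have hper : Function.minimalPeriod ⇑ψ x ∣ Fct := by
          apply Nat.dvd_factorial (perm_minPeriod_pos ψ x)
          calc Function.minimalPeriod ⇑ψ x ≤ (C k).card :=
                minPeriod_le_card ψ (fun y hy => image_mem_perm (hψ k) hy) hk
            _ ≤ cstar := by rw [hcstar]; exact Finset.le_sup (f := fun k => (C k).card) (Finset.mem_univ k)
        have h3 : (⇑ψ)^[Fct] x = x := Function.isPeriodicPt_iff_minimalPeriod_dvd.mpr hper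
        rw [Equiv.Perm.iterate_eq_pow] at h3
        simpa using h3
      have h5 : orderOf ψ ∣ Nat.gcd d L := Nat.dvd_gcd hdvdB hdvdL
      rw [hcop] at h5
      exact orderOf_eq_one_iff.mp (Nat.dvd_one.mp h5)
    by_cases hex : ∃ g : GG h n, ((∀ j, (B j).image ⇑g.1 = B j) ∧
        (∀ k, (C k).image ⇑g.2.1 = C k)) ∧ act g p = p ∧
        (g.2.2 : Equiv.Perm (Fin n)) = rho0 n
    · obtain ⟨g₀, hg₀U, hg₀stab, hg₀rho⟩ := hex
      have hst₀ : ∀ i, g₀.2.1 * p (g₀.1⁻¹ i) * rho0 n = p i := by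
        intro i
        have h1 : g₀.2.1 * p (g₀.1⁻¹ i) * (g₀.2.2 : Equiv.Perm (Fin n)) = p i :=
          congrFun hg₀stab i
        rwa [hg₀rho] at h1
      have hsq : g₀.2.1 * g₀.2.1 = 1 := by
        apply keyB (g₀.1 * g₀.1)
        · intro j
          rw [Equiv.Perm.coe_mul, ← Finset.image_image, hg₀U.1 j, hg₀U.1 j]
        · intro k
          rw [Equiv.Perm.coe_mul, ← Finset.image_image, hg₀U.2 k, hg₀U.2 k]
        · intro i
          have hco : (g₀.1 * g₀.1)⁻¹ i = g₀.1⁻¹ (g₀.1⁻¹ i) := by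
            rw [mul_inv_rev, Equiv.Perm.mul_apply]
          rw [hco, ← hst₀ i, ← hst₀ (g₀.1⁻¹ i)]
          rw [show g₀.2.1 * (g₀.2.1 * p (g₀.1⁻¹ (g₀.1⁻¹ i)) * rho0 n) * rho0 n
              = g₀.2.1 * g₀.2.1 * p (g₀.1⁻¹ (g₀.1⁻¹ i)) * (rho0 n * rho0 n) by group]
          rw [rho0_sq, mul_one]
      have h2L : (2:ℕ) ∣ L := Nat.dvd_lcm_left 2 Fct
      have hdodd : ¬ ((2:ℕ) ∣ d) := by
        intro h2d
        have h6 := Nat.dvd_gcd h2d h2L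
        rw [hcop] at h6
        omega
      obtain ⟨j₀, hj₀⟩ : ∃ j₀, ¬ ((2:ℕ) ∣ (B j₀).card) := by
        by_contra hall
        push_neg at hall
        exact hdodd (Finset.dvd_gcd fun j _ => hall j)
      obtain ⟨x₀, hx₀B, hx₀odd⟩ :
          ∃ x₀ ∈ B j₀, ¬ ((2:ℕ) ∣ Function.minimalPeriod (⇑g₀.1⁻¹) x₀) := by
        by_contra hall
        push_neg at hall
        exact hj₀ (dvd_card_of_invariant g₀.1⁻¹ 2 (B j₀)
          (fun x hx => image_inv_mem (hg₀U.1 j₀) hx) hall)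
      have hiter := stab_iter hst₀ (Function.minimalPeriod (⇑g₀.1⁻¹) x₀) x₀
      rw [Function.iterate_minimalPeriod] at hiter
      obtain ⟨c₀, hc₀⟩ : ∃ c₀, Function.minimalPeriod (⇑g₀.1⁻¹) x₀ = 2*c₀+1 :=
        ⟨Function.minimalPeriod (⇑g₀.1⁻¹) x₀ / 2, by omega⟩
      rw [hc₀] at hiter
      have hψpow : g₀.2.1 ^ (2*c₀+1) = g₀.2.1 := by
        rw [pow_succ, pow_mul, pow_two, hsq, one_pow, one_mul]
      have hρpow : (rho0 n) ^ (2*c₀+1) = rho0 n := by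
        rw [pow_succ, pow_mul, pow_two, rho0_sq, one_pow, one_mul]
      rw [hψpow, hρpow] at hiter
      have hconj : IsConj (rho0 n) g₀.2.1 := by
        rw [isConj_iff]
        refine ⟨p x₀, ?_⟩
        have h4 := congrArg (fun z => z * (rho0 n) * (p x₀)⁻¹) hiter
        rw [show g₀.2.1 * p x₀ * rho0 n * rho0 n * (p x₀)⁻¹
            = g₀.2.1 * p x₀ * (rho0 n * rho0 n) * (p x₀)⁻¹ by group, rho0_sq, mul_one,
          mul_inv_cancel_right] at h4
        exact h4.symm
      refine ⟨g₀.2.1, hconj, ?_⟩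
      intro g hg hstab
      rcases omega_cases g.2.2 with hu | hu
      · left
        refine ⟨?_, hu⟩
        apply keyB g.1 g.2.1 hg.1 hg.2
        intro i
        have h1 : g.2.1 * p (g.1⁻¹ i) * (g.2.2 : Equiv.Perm (Fin n)) = p i := congrFun hstab i
        rwa [hu, mul_one] at h1
      · right
        refine ⟨?_, hu⟩
        have hstg : ∀ i, g.2.1 * p (g.1⁻¹ i) * rho0 n = p i := by
          intro i
          have h1 : g.2.1 * p (g.1⁻¹ i) * (g.2.2 : Equiv.Perm (Fin n)) = p i := congrFun hstab i
          rwa [hu] at h1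
        have hcomb : g.2.1 * g₀.2.1⁻¹ = 1 := by
          apply keyB (g.1 * g₀.1⁻¹)
          · intro j
            rw [Equiv.Perm.coe_mul, ← Finset.image_image, image_inv_eq (hg₀U.1 j), hg.1 j]
          · intro k
            rw [Equiv.Perm.coe_mul, ← Finset.image_image, image_inv_eq (hg₀U.2 k), hg.2 k]
          · intro i
            have hco : (g.1 * g₀.1⁻¹)⁻¹ i = g₀.1 (g.1⁻¹ i) := by
              rw [mul_inv_rev, inv_inv, Equiv.Perm.mul_apply]
            rw [hco]
            have e0 := hst₀ (g₀.1 (g.1⁻¹ i))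
            rw [show g₀.1⁻¹ (g₀.1 (g.1⁻¹ i)) = g.1⁻¹ i from g₀.1.symm_apply_apply _] at e0
            rw [← e0]
            rw [show g.2.1 * g₀.2.1⁻¹ * (g₀.2.1 * p (g.1⁻¹ i) * rho0 n)
                = g.2.1 * p (g.1⁻¹ i) * rho0 n by group]
            exact hstg i
        rwa [mul_inv_eq_one] at hcomb
    · refine ⟨rho0 n, IsConj.refl _, ?_⟩
      intro g hg hstab
      rcases omega_cases g.2.2 with hu | hu
      · left
        refine ⟨?_, hu⟩
        apply keyB g.1 g.2.1 hg.1 hg.2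
        intro i
        have h1 : g.2.1 * p (g.1⁻¹ i) * (g.2.2 : Equiv.Perm (Fin n)) = p i := congrFun hstab i
        rwa [hu, mul_one] at h1
      · exact absurd ⟨g, hg, hstab, hu⟩ hex
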